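/- If h : Y → Y' is a fibrewise map admitting a left fibrewise homotopy inverse (i.e., there is a fibrewise map h' : Y' → Y with h' ∘ h ≃_B id_Y), then for all fibrewise maps f, g : X → Y, D_B(h ∘ f, h ∘ g) = D_B(f, g). -/

import Mathlib

open scoped unitInterval

variable {B X Y Z X' Y' : Type*} [TopologicalSpace B] [TopologicalSpace X]
  [TopologicalSpace Y] [TopologicalSpace Z] [TopologicalSpace X'] [TopologicalSpace Y']

/-- `f` and `g` are fibrewise homotopic over `B` on the subset `U ⊆ X`:
there is a homotopy `H` from `f|U` to `g|U` each of whose stages is fibrewise. -/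
def FibHomotopicOn (pX : X → B) (pY : Y → B) (f g : X → Y) (U : Set X) : Prop :=
  ∃ H : C(U × unitInterval, Y),
    (∀ u : U, H (u, 0) = f u) ∧ (∀ u : U, H (u, 1) = g u) ∧
    (∀ (u : U) (t : unitInterval), pY (H (u, t)) = pX u)

/-- The parametrized (fibrewise) homotopic distance `D_B(f,g)`: the least `n`
such that `X` has an open cover by `n+1` sets on each of which `f` and `g` are
fibrewise homotopic (`∞` if there is no such cover). -/
noncomputable def fibDist (pX : X → B) (pY : Y → B) (f g : X → Y) : ℕ∞ :=
  sInf ((fun n : ℕ => (n : ℕ∞)) ''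
    {n : ℕ | ∃ U : Fin (n + 1) → Set X,
      (∀ i, IsOpen (U i)) ∧ (⋃ i, U i) = Set.univ ∧
      ∀ i, FibHomotopicOn pX pY f g (U i)})

lemma fibHom_postcomp_iff (pX : X → B) (pY : Y → B) (pY' : Y' → B)
    (f g : X → Y) (h : Y → Y') (h' : Y' → Y)
    (hf : Continuous f) (hg : Continuous g) (hh : Continuous h) (hh' : Continuous h')
    (hfp : ∀ x, pY (f x) = pX x) (hgp : ∀ x, pY (g x) = pX x)
    (hhp : ∀ y, pY' (h y) = pY y) (hh'p : ∀ y, pY (h' y) = pY' y)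
    (hleft : FibHomotopicOn pY pY (h' ∘ h) id Set.univ) (U : Set X) :
    FibHomotopicOn pX pY' (h ∘ f) (h ∘ g) U ↔ FibHomotopicOn pX pY f g U := by
  constructor
  · rintro ⟨H, H0, H1, Hp⟩
    obtain ⟨K, K0, K1, Kp⟩ := hleft
    set P : C(U, Y) → Prop := fun k => ∀ u : U, pY (k u) = pX u with hP
    set F : C(U, Y) := ⟨fun u => f u, hf.comp continuous_subtype_val⟩ with hF
    set G : C(U, Y) := ⟨fun u => g u, hg.comp continuous_subtype_val⟩ with hG
    set A : C(U, Y) := ⟨fun u => h' (h (f u)),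
      (hh'.comp hh).comp (hf.comp continuous_subtype_val)⟩ with hA
    set D : C(U, Y) := ⟨fun u => h' (h (g u)),
      (hh'.comp hh).comp (hg.comp continuous_subtype_val)⟩ with hD
    -- homotopy F ≃ A via K reversed
    have W1 : ContinuousMap.HomotopyWith F A P :=
      { toFun := fun p => K (⟨f p.2, Set.mem_univ _⟩, unitInterval.symm p.1)
        continuous_toFun := K.continuous.comp <| by
          apply Continuous.prodMk
          · exact Continuous.subtype_mk ((hf.comp continuous_subtype_val).comp continuous_snd) _
          · exact unitInterval.continuous_symm.comp continuous_fst
        map_zero_left := fun u => by simpa [hF] using K1 ⟨f u, Set.mem_univ _⟩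
        map_one_left := fun u => by simpa [hA] using K0 ⟨f u, Set.mem_univ _⟩
        prop' := fun t u => by simpa using (Kp ⟨f u, Set.mem_univ _⟩ _).trans (hfp u) }
    have W3 : ContinuousMap.HomotopyWith D G P :=
      { toFun := fun p => K (⟨g p.2, Set.mem_univ _⟩, p.1)
        continuous_toFun := K.continuous.comp <| by
          apply Continuous.prodMk
          · exact Continuous.subtype_mk ((hg.comp continuous_subtype_val).comp continuous_snd) _
          · exact continuous_fst
        map_zero_left := fun u => by simpa [hD] using K0 ⟨g u, Set.mem_univ _⟩
        map_one_left := fun u => by simpa [hG] using K1 ⟨g u, Set.mem_univ _⟩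
        prop' := fun t u => by simpa using (Kp ⟨g u, Set.mem_univ _⟩ _).trans (hgp u) }
    have W2 : ContinuousMap.HomotopyWith A D P :=
      { toFun := fun p => h' (H (p.2, p.1))
        continuous_toFun := hh'.comp <| H.continuous.comp <| by continuity
        map_zero_left := fun u => by simpa [hA] using congrArg h' (H0 u)
        map_one_left := fun u => by simpa [hD] using congrArg h' (H1 u)
        prop' := fun t u => by simpa using (hh'p (H (u, t))).trans (Hp u t) }
    have W : ContinuousMap.HomotopyWith F G P := (W1.trans W2).trans W3
    refine ⟨⟨fun p => W (p.2, p.1), W.continuous.comp (by continuity)⟩, ?_, ?_, ?_⟩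
    · intro u; exact W.apply_zero u
    · intro u; exact W.apply_one u
    · intro u t; exact W.prop' t u
  · rintro ⟨H, H0, H1, Hp⟩
    refine ⟨⟨fun p => h (H p), hh.comp H.continuous⟩, ?_, ?_, ?_⟩
    · intro u; exact congrArg h (H0 u)
    · intro u; exact congrArg h (H1 u)
    · intro u t; exact (hhp (H (u, t))).trans (Hp u t)

theorem fibDist_postcomp_eq_of_leftInverse (pX : X → B) (pY : Y → B) (pY' : Y' → B)
    (f g : X → Y) (h : Y → Y') (h' : Y' → Y)
    (hf : Continuous f) (hg : Continuous g) (hh : Continuous h) (hh' : Continuous h')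
    (hfp : ∀ x, pY (f x) = pX x) (hgp : ∀ x, pY (g x) = pX x)
    (hhp : ∀ y, pY' (h y) = pY y) (hh'p : ∀ y, pY (h' y) = pY' y)
    (hleft : FibHomotopicOn pY pY (h' ∘ h) id Set.univ) :
    fibDist pX pY' (h ∘ f) (h ∘ g) = fibDist pX pY f g := by
  unfold fibDist
  have : {n : ℕ | ∃ U : Fin (n + 1) → Set X,
      (∀ i, IsOpen (U i)) ∧ (⋃ i, U i) = Set.univ ∧
      ∀ i, FibHomotopicOn pX pY' (h ∘ f) (h ∘ g) (U i)} =
      {n : ℕ | ∃ U : Fin (n + 1) → Set X,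
      (∀ i, IsOpen (U i)) ∧ (⋃ i, U i) = Set.univ ∧
      ∀ i, FibHomotopicOn pX pY f g (U i)} := by
    ext n
    simp only [Set.mem_setOf_eq,
      fibHom_postcomp_iff pX pY pY' f g h h' hf hg hh hh' hfp hgp hhp hh'p hleft]
  rw [this]
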